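/- Let w be a finite rich word, let p be the longest palindromic prefix of a non-palindromic factor u of w, and let q be the longest palindromic suffix of u. Then p and q are unioccurrent in u. -/
import Mathlib

/-- The finset of (distinct) palindromic factors of a finite word `w`,
including the empty word. -/
def palFactors {A : Type*} [DecidableEq A] (w : List A) : Finset (List A) :=
  ((w.inits.flatMap List.tails).filter (fun u => u.reverse = u)).toFinset

/-- A finite word `w` is rich if it has exactly `|w| + 1` distinct palindromic factors. -/
def Rich {A : Type*} [DecidableEq A] (w : List A) : Prop :=
  (palFactors w).card = w.length + 1

/-- `p` is the longest palindromic prefix of `u`. -/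
def LongestPalPrefix {A : Type*} (p u : List A) : Prop :=
  p <+: u ∧ p.reverse = p ∧ ∀ p' : List A, p' <+: u → p'.reverse = p' → p'.length ≤ p.length

/-- `q` is the longest palindromic suffix of `u`. -/
def LongestPalSuffix {A : Type*} (q u : List A) : Prop :=
  q <:+ u ∧ q.reverse = q ∧ ∀ q' : List A, q' <:+ u → q'.reverse = q' → q'.length ≤ q.length

/-- A non-empty word `u` is unioccurrent in `v` if there is exactly one pair of
words `(s, t)` with `v = s ++ u ++ t`. -/
def Unioccurrent {A : Type*} (u v : List A) : Prop :=
  u ≠ [] ∧ ∃! st : List A × List A, v = st.1 ++ u ++ st.2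

open List

section Aux
variable {A : Type*} [DecidableEq A]

lemma infix_iff_suffix_prefix {x v : List A} :
    x <:+: v ↔ ∃ i, x <:+ i ∧ i <+: v := by
  constructor
  · rintro ⟨s, t, rfl⟩
    exact ⟨s ++ x, ⟨s, rfl⟩, ⟨t, by simp⟩⟩
  · rintro ⟨i, hx, hi⟩
    exact hx.isInfix.trans hi.isInfix

lemma suffix_of_suffix_length_le' {l₁ l₂ l₃ : List A} (h : l₁ <:+ l₃) (h2 : l₂ <:+ l₃)
    (hl : l₁.length ≤ l₂.length) : l₁ <:+ l₂ := by
  rw [← reverse_prefix] at h h2 ⊢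
  exact prefix_of_prefix_length_le h h2 (by simpa)

lemma mem_palFactors {x v : List A} :
    x ∈ palFactors v ↔ x <:+: v ∧ x.reverse = x := by
  simp only [palFactors, List.mem_toFinset, List.mem_filter, List.mem_flatMap, List.mem_inits,
    List.mem_tails, decide_eq_true_eq]
  rw [infix_iff_suffix_prefix]
  constructor
  · rintro ⟨⟨i, hi, hx⟩, hp⟩; exact ⟨⟨i, hx, hi⟩, hp⟩
  · rintro ⟨⟨i, hx, hi⟩, hp⟩; exact ⟨⟨i, hi, hx⟩, hp⟩

lemma palFactors_mono {u v : List A} (h : u <:+: v) : palFactors u ⊆ palFactors v := by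
  intro x hx
  rw [mem_palFactors] at *
  exact ⟨hx.1.trans h, hx.2⟩

lemma nil_mem_palFactors (v : List A) : ([] : List A) ∈ palFactors v := by
  rw [mem_palFactors]; exact ⟨nil_infix, rfl⟩

/-- Every palindromic factor of `v ++ [a]` is either a factor of `v` or the
longest palindromic suffix of `v ++ [a]`. -/
lemma palFactors_concat_subset {v : List A} {a : A} {q : List A}
    (hq : LongestPalSuffix q (v ++ [a])) :
    palFactors (v ++ [a]) ⊆ insert q (palFactors v) := by
  intro x hx
  rw [mem_palFactors, infix_iff_suffix_prefix] at hx
  obtain ⟨⟨i, hxi, hiv⟩, hpal⟩ := hx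
  by_cases hle : i.length ≤ v.length
  · have : i <+: v := prefix_of_prefix_length_le hiv (prefix_append v [a]) hle
    exact Finset.mem_insert_of_mem (mem_palFactors.2 ⟨hxi.isInfix.trans this.isInfix, hpal⟩)
  · -- i = v ++ [a]
    have hieq : i = v ++ [a] := hiv.eq_of_length_le (by simp; omega)
    subst hieq
    by_cases hxq : x = q
    · subst hxq; exact Finset.mem_insert_self _ _
    · have hlen : x.length ≤ q.length := hq.2.2 x hxi hpal
      have hxsq : x <:+ q := suffix_of_suffix_length_le' hxi hq.1 hlen
      have hlt : x.length < q.length := by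
        rcases lt_or_eq_of_le hlen with h | h
        · exact h
        · exact absurd (hxsq.eq_of_length h) hxq
      -- x is a proper suffix of palindrome q, hence a prefix of q
      have hxp : x <+: q := by
        have := reverse_prefix.2 hxsq
        rwa [hpal, hq.2.1] at this
      obtain ⟨r, hr⟩ := hxp
      have hrne : r ≠ [] := by
        rintro rfl; simp at hr; rw [hr] at hlt; exact lt_irrefl _ hlt
      obtain ⟨s, hs⟩ := hq.1
      -- v ++ [a] = s ++ x ++ r, r ≠ []
      have : v = s ++ x ++ r.dropLast := by
        have h1 : v ++ [a] = (s ++ x ++ r.dropLast) ++ [r.getLast hrne] := by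
          rw [← hs, ← hr]
          simp [List.dropLast_append_getLast hrne]
        have := congrArg List.dropLast h1
        simpa using this
      exact Finset.mem_insert_of_mem (mem_palFactors.2 ⟨⟨s, r.dropLast, this.symm⟩, hpal⟩)
    
lemma exists_longestPalSuffix (l : List A) : ∃ q, LongestPalSuffix q l := by
  induction l with
  | nil => exact ⟨[], suffix_refl _, rfl, fun q' hq' _ => hq'.length_le⟩
  | cons a l ih =>
    by_cases hpal : (a :: l).reverse = a :: l
    · exact ⟨a :: l, suffix_refl _, hpal, fun q' hq' _ => hq'.length_le⟩
    · obtain ⟨q, hq1, hq2, hq3⟩ := ih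
      refine ⟨q, hq1.trans (suffix_cons a l), hq2, fun q' hq' hq'p => ?_⟩
      rcases suffix_cons_iff.1 hq' with rfl | h
      · exact absurd hq'p hpal
      · exact hq3 q' h hq'p

lemma card_palFactors_concat (v : List A) (a : A) :
    (palFactors (v ++ [a])).card ≤ (palFactors v).card + 1 := by
  obtain ⟨q, hq⟩ := exists_longestPalSuffix (v ++ [a])
  calc (palFactors (v ++ [a])).card ≤ (insert q (palFactors v)).card :=
        Finset.card_le_card (palFactors_concat_subset hq)
    _ ≤ (palFactors v).card + 1 := Finset.card_insert_le _ _

lemma card_palFactors_append_le (v t : List A) :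
    (palFactors (v ++ t)).card ≤ (palFactors v).card + t.length := by
  induction t using List.reverseRecOn with
  | nil => simp
  | append_singleton t' a ih =>
    calc (palFactors (v ++ (t' ++ [a]))).card = (palFactors ((v ++ t') ++ [a])).card := by
          rw [append_assoc]
      _ ≤ (palFactors (v ++ t')).card + 1 := card_palFactors_concat _ _
      _ ≤ (palFactors v).card + t'.length + 1 := by omega
      _ = (palFactors v).card + (t' ++ [a]).length := by simp; omega

lemma card_palFactors_le (v : List A) : (palFactors v).card ≤ v.length + 1 := by
  have h := card_palFactors_append_le [] v
  have h0 : (palFactors ([] : List A)).card = 1 := by simp [palFactors]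
  rw [nil_append, h0] at h
  omega

lemma rich_of_prefix {w v : List A} (hw : Rich w) (h : v <+: w) : Rich v := by
  obtain ⟨t, rfl⟩ := h
  have h1 := card_palFactors_append_le v t
  have h2 := card_palFactors_le v
  unfold Rich at *
  simp only [length_append] at hw
  omega

lemma palFactors_reverse (v : List A) :
    palFactors v.reverse = (palFactors v).image List.reverse := by
  ext x
  rw [mem_palFactors, Finset.mem_image]
  constructor
  · rintro ⟨hinf, hpal⟩
    refine ⟨x, mem_palFactors.2 ⟨?_, hpal⟩, hpal⟩
    have h2 : x.reverse <:+: v.reverse.reverse := reverse_infix.2 hinf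
    rwa [reverse_reverse, hpal] at h2
  · rintro ⟨y, hy, rfl⟩
    rw [mem_palFactors] at hy
    exact ⟨reverse_infix.2 hy.1, by simp [hy.2]⟩

lemma rich_reverse {v : List A} (h : Rich v) : Rich v.reverse := by
  unfold Rich at *
  rw [palFactors_reverse, Finset.card_image_of_injective _ reverse_injective, length_reverse]
  exact h

lemma rich_of_infix {w v : List A} (hw : Rich w) (h : v <:+: w) : Rich v := by
  obtain ⟨s, t, rfl⟩ := h
  have h1 : Rich (s ++ v) := rich_of_prefix hw ⟨t, by simp⟩
  have h2 : Rich (s ++ v).reverse := rich_reverse h1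
  have h3 : Rich v.reverse := by
    refine rich_of_prefix h2 ?_
    rw [reverse_append]
    exact prefix_append _ _
  simpa using rich_reverse h3

/-- Core lemma: the longest palindromic suffix of a non-empty rich word is unioccurrent. -/
lemma longestPalSuffix_unioccurrent {u q : List A} (hu : Rich u) (hne : u ≠ [])
    (hq : LongestPalSuffix q u) : Unioccurrent q u := by
  set v := u.dropLast with hv
  set a := u.getLast hne with ha
  have huva : u = v ++ [a] := (List.dropLast_append_getLast hne).symm
  have hvrich : Rich v := rich_of_prefix hu ⟨[a], huva.symm⟩
  have hsub : palFactors u ⊆ insert q (palFactors v) := by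
    rw [huva]; exact palFactors_concat_subset (huva ▸ hq)
  have hqnotv : q ∉ palFactors v := by
    intro hmem
    have : palFactors u ⊆ palFactors v := by
      intro x hx
      rcases Finset.mem_insert.1 (hsub hx) with rfl | h
      · exact hmem
      · exact h
    have hle := Finset.card_le_card this
    unfold Rich at hu hvrich
    rw [hu, hvrich] at hle
    have : v.length + 1 = u.length := by rw [huva]; simp
    omega
  have hqne : q ≠ [] := by
    rintro rfl; exact hqnotv (nil_mem_palFactors v)
  obtain ⟨s, hs⟩ := hq.1
  refine ⟨hqne, ⟨(s, []), by simp [← hs], ?_⟩⟩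
  rintro ⟨s', t'⟩ h
  simp only at h
  have ht' : t' = [] := by
    by_contra htne
    apply hqnotv
    rw [mem_palFactors]
    refine ⟨⟨s', t'.dropLast, ?_⟩, hq.2.1⟩
    have h1 : u = (s' ++ q ++ t'.dropLast) ++ [t'.getLast htne] := by
      rw [h]; simp [List.dropLast_append_getLast htne]
    have h2 : u = v ++ [a] := huva
    rw [h1] at h2
    have h3 := congrArg List.dropLast h2
    simp only [dropLast_concat] at h3
    rw [← h3]
  subst ht'
  simp only [append_nil] at h
  have hss : s' ++ q = s ++ q := by rw [← h, hs]
  have : s' = s := by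
    have := congrArg List.reverse hss
    simp only [reverse_append] at this
    have := append_cancel_left this
    simpa using congrArg List.reverse this
  simp [this]

lemma unioccurrent_reverse {x l : List A} (hpal : x.reverse = x)
    (h : Unioccurrent x l.reverse) : Unioccurrent x l := by
  obtain ⟨hne, ⟨⟨s₀, t₀⟩, h₀, huniq⟩⟩ := h
  refine ⟨hne, ⟨(t₀.reverse, s₀.reverse), ?_, ?_⟩⟩
  · have : l = l.reverse.reverse := (reverse_reverse l).symm
    rw [this, h₀]
    simp [hpal]
  · rintro ⟨s, t⟩ h
    simp only at h ⊢
    have hrev : l.reverse = t.reverse ++ x ++ s.reverse := by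
      rw [h]; simp [hpal]
    have huq := huniq (t.reverse, s.reverse) hrev
    simp only [Prod.mk.injEq] at huq
    obtain ⟨h1, h2⟩ := huq
    rw [Prod.mk.injEq]
    exact ⟨by rw [← h2]; simp, by rw [← h1]; simp⟩

end Aux

/-- If `u` is a non-palindromic factor of a finite rich word `w` with longest
palindromic prefix `p` and longest palindromic suffix `q`, then `p` and `q` are
unioccurrent in `u`. -/
theorem longest_pal_prefix_suffix_unioccurrent {A : Type*} [DecidableEq A]
    (w u p q : List A) (hw : Rich w) (hu : u <:+: w) (hnp : u.reverse ≠ u)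
    (hp : LongestPalPrefix p u) (hq : LongestPalSuffix q u) :
    Unioccurrent p u ∧ Unioccurrent q u := by
  have hurich : Rich u := rich_of_infix hw hu
  have hune : u ≠ [] := by rintro rfl; simp at hnp
  constructor
  · -- p : via reverse
    have hrne : u.reverse ≠ [] := by simpa using hune
    have hrrich : Rich u.reverse := rich_reverse hurich
    have hps : LongestPalSuffix p u.reverse := by
      refine ⟨?_, hp.2.1, ?_⟩
      · rw [← hp.2.1]; exact reverse_suffix.2 hp.1
      · intro q' hq' hq'p
        have h1 : q'.reverse <+: u := by
          have := reverse_prefix.2 hq'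
          rwa [reverse_reverse] at this
        have hq'pal : q'.reverse.reverse = q'.reverse := by rw [reverse_reverse, hq'p]
        have := hp.2.2 q'.reverse h1 hq'pal
        simpa using this
    exact unioccurrent_reverse hp.2.1 (longestPalSuffix_unioccurrent hrrich hrne hps)
  · exact longestPalSuffix_unioccurrent hurich hune hq
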